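/- With the pentagram setup on points vⱼ in general position and image uⱼ = Aⱼvⱼ + Bⱼv_{j+2} = Cⱼv_{j−1} + Dⱼv_{j+1}, the exact algebraic identity holds: [u_{i−1}−uᵢ, uᵢ−u_{i+1}] / [u_{i−1}−u_{i+1}, uᵢ−u_{i+2}] = (Dᵢ − B_{i−1})·B_{i+1} / (A_{i−1}·(D_{i+2} − B_{i+1}) + B_{i+1}·(Dᵢ − B_{i−1})). -/

import Mathlib

noncomputable section

/-- The 2×2 determinant [u,v] = u₁v₂ − u₂v₁. -/
def det2 (u v : ℝ × ℝ) : ℝ := u.1 * v.2 - u.2 * v.1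

/-- A_i = [v_{i-1}-v_{i+1}, v_{i+1}-v_{i+2}] / [v_{i-1}-v_{i+1}, v_i-v_{i+2}]. -/
def Acoef (v : ℤ → ℝ × ℝ) (i : ℤ) : ℝ :=
  det2 (v (i-1) - v (i+1)) (v (i+1) - v (i+2)) / det2 (v (i-1) - v (i+1)) (v i - v (i+2))

/-- B_i = [v_{i-1}-v_i, v_i-v_{i+1}] / [v_{i-1}-v_{i+1}, v_i-v_{i+2}]. -/
def Bcoef (v : ℤ → ℝ × ℝ) (i : ℤ) : ℝ :=
  det2 (v (i-1) - v i) (v i - v (i+1)) / det2 (v (i-1) - v (i+1)) (v i - v (i+2))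

/-- C_i = [v_i-v_{i+1}, v_{i+1}-v_{i+2}] / [v_{i-1}-v_{i+1}, v_i-v_{i+2}]. -/
def Ccoef (v : ℤ → ℝ × ℝ) (i : ℤ) : ℝ :=
  det2 (v i - v (i+1)) (v (i+1) - v (i+2)) / det2 (v (i-1) - v (i+1)) (v i - v (i+2))

/-- D_i = [v_{i-1}-v_i, v_i-v_{i+2}] / [v_{i-1}-v_{i+1}, v_i-v_{i+2}]. -/
def Dcoef (v : ℤ → ℝ × ℝ) (i : ℤ) : ℝ :=
  det2 (v (i-1) - v i) (v i - v (i+2)) / det2 (v (i-1) - v (i+1)) (v i - v (i+2))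

/-- The pentagram map: u_i = A_i v_i + B_i v_{i+2}, the intersection of the
diagonals (v_{i-1} v_{i+1}) and (v_i v_{i+2}). -/
def pent (v : ℤ → ℝ × ℝ) (i : ℤ) : ℝ × ℝ :=
  Acoef v i • v i + Bcoef v i • v (i+2)

lemma sumAB (v : ℤ → ℝ × ℝ) (hden : ∀ j, det2 (v (j-1) - v (j+1)) (v j - v (j+2)) ≠ 0)
    (j : ℤ) : Acoef v j + Bcoef v j = 1 := by
  rw [Acoef, Bcoef, ← add_div, div_eq_one_iff_eq (hden j)]
  simp only [det2, Prod.fst_sub, Prod.snd_sub]; ring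

lemma sumCD (v : ℤ → ℝ × ℝ) (hden : ∀ j, det2 (v (j-1) - v (j+1)) (v j - v (j+2)) ≠ 0)
    (j : ℤ) : Ccoef v j + Dcoef v j = 1 := by
  rw [Ccoef, Dcoef, ← add_div, div_eq_one_iff_eq (hden j)]
  simp only [det2, Prod.fst_sub, Prod.snd_sub]; ring

lemma diffp (v : ℤ → ℝ × ℝ) (hden : ∀ j, det2 (v (j-1) - v (j+1)) (v j - v (j+2)) ≠ 0)
    (hu : ∀ j, pent v j = Ccoef v j • v (j-1) + Dcoef v j • v (j+1)) (j : ℤ) :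
    pent v j - pent v (j+1) = (Dcoef v (j+1) - Bcoef v j) • (v j - v (j+2)) := by
  have h1 := sumAB v hden j
  have h2 := sumCD v hden (j+1)
  rw [hu (j+1), pent]
  simp only [show (j:ℤ)+1-1 = j from by ring, show (j:ℤ)+1+1 = j+2 from by ring]
  rw [Prod.ext_iff]
  simp only [Prod.fst_sub, Prod.snd_sub, Prod.fst_add, Prod.snd_add, Prod.smul_fst,
    Prod.smul_snd, smul_eq_mul]
  constructor
  · linear_combination (v j).1 * h1 - (v j).1 * h2
  · linear_combination (v j).2 * h1 - (v j).2 * h2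

set_option maxHeartbeats 4000000 in
lemma keypoly (p1 p2 p3 p4 p5 p6 : ℝ × ℝ) :
    det2 (p1-p3) (p3-p4) * det2 (p2-p4) (p3-p5) *
      (det2 (p3-p4) (p4-p6) * det2 (p2-p4) (p3-p5)
        - det2 (p2-p3) (p3-p4) * det2 (p3-p5) (p4-p6))
    = det2 (p3-p4) (p4-p5) * det2 (p2-p4) (p4-p6) *
        (det2 (p2-p3) (p3-p5) * det2 (p1-p3) (p2-p4)
          - det2 (p1-p2) (p2-p3) * det2 (p2-p4) (p3-p5))
      + det2 (p3-p4) (p4-p5) * det2 (p1-p3) (p2-p4) *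
        (det2 (p3-p4) (p4-p6) * det2 (p2-p4) (p3-p5)
          - det2 (p2-p3) (p3-p4) * det2 (p3-p5) (p4-p6)) := by
  simp only [det2, Prod.fst_sub, Prod.snd_sub]
  ring

lemma keyfrac (nA nBm nD0 nB0 nD1 nB1 X Dm D0 D1 : ℝ)
    (h1 : Dm ≠ 0) (h2 : D0 ≠ 0) (h3 : D1 ≠ 0)
    (hP : nA * D0 * (nD1 * D0 - nB0 * D1)
      = nB1 * X * (nD0 * Dm - nBm * D0) + nB1 * Dm * (nD1 * D0 - nB0 * D1)) :
    (nA / Dm) * (nD1 / D1 - nB0 / D0) * D0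
    = (nB1 / D1) * (nD0 / D0 - nBm / Dm) * X + (nB1 / D1) * (nD1 / D1 - nB0 / D0) * D1 := by
  field_simp
  linear_combination hP

theorem stmt14 (v : ℤ → ℝ × ℝ) (i : ℤ)
    (hden : ∀ j, det2 (v (j-1) - v (j+1)) (v j - v (j+2)) ≠ 0)
    (hu : ∀ j, pent v j = Ccoef v j • v (j-1) + Dcoef v j • v (j+1))
    (hdenU : det2 (pent v (i-1) - pent v (i+1)) (pent v i - pent v (i+2)) ≠ 0)
    (hdenR : Acoef v (i-1) * (Dcoef v (i+2) - Bcoef v (i+1))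
        + Bcoef v (i+1) * (Dcoef v i - Bcoef v (i-1)) ≠ 0) :
    det2 (pent v (i-1) - pent v i) (pent v i - pent v (i+1)) /
      det2 (pent v (i-1) - pent v (i+1)) (pent v i - pent v (i+2))
    = (Dcoef v i - Bcoef v (i-1)) * Bcoef v (i+1) /
      (Acoef v (i-1) * (Dcoef v (i+2) - Bcoef v (i+1))
        + Bcoef v (i+1) * (Dcoef v i - Bcoef v (i-1))) := by
  have e1 := diffp v hden hu (i-1)
  have e2 := diffp v hden hu i
  have e3 := diffp v hden hu (i+1)
  simp only [show (i:ℤ)-1+1 = i from by ring, show (i:ℤ)-1+2 = i+1 from by ring] at e1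
  simp only [show (i:ℤ)+1+1 = i+2 from by ring, show (i:ℤ)+1+2 = i+3 from by ring] at e3
  have e12 : pent v (i-1) - pent v (i+1)
      = (Dcoef v i - Bcoef v (i-1)) • (v (i-1) - v (i+1))
        + (Dcoef v (i+1) - Bcoef v i) • (v i - v (i+2)) := by
    rw [← sub_add_sub_cancel (pent v (i-1)) (pent v i) (pent v (i+1)), e1, e2]
  have e23 : pent v i - pent v (i+2)
      = (Dcoef v (i+1) - Bcoef v i) • (v i - v (i+2))
        + (Dcoef v (i+2) - Bcoef v (i+1)) • (v (i+1) - v (i+3)) := by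
    rw [← sub_add_sub_cancel (pent v i) (pent v (i+1)) (pent v (i+2)), e2, e3]
  have hNum : det2 (pent v (i-1) - pent v i) (pent v i - pent v (i+1))
      = (Dcoef v i - Bcoef v (i-1)) * (Dcoef v (i+1) - Bcoef v i)
        * det2 (v (i-1) - v (i+1)) (v i - v (i+2)) := by
    rw [e1, e2]
    simp only [det2, Prod.fst_sub, Prod.snd_sub, Prod.smul_fst, Prod.smul_snd, smul_eq_mul]
    ring
  have hDen : det2 (pent v (i-1) - pent v (i+1)) (pent v i - pent v (i+2))
      = (Dcoef v i - Bcoef v (i-1)) * (Dcoef v (i+1) - Bcoef v i)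
          * det2 (v (i-1) - v (i+1)) (v i - v (i+2))
        + (Dcoef v i - Bcoef v (i-1)) * (Dcoef v (i+2) - Bcoef v (i+1))
          * det2 (v (i-1) - v (i+1)) (v (i+1) - v (i+3))
        + (Dcoef v (i+1) - Bcoef v i) * (Dcoef v (i+2) - Bcoef v (i+1))
          * det2 (v i - v (i+2)) (v (i+1) - v (i+3)) := by
    rw [e12, e23]
    simp only [det2, Prod.fst_sub, Prod.snd_sub, Prod.fst_add, Prod.snd_add,
      Prod.smul_fst, Prod.smul_snd, smul_eq_mul]
    ring
  have h1 := hden (i-1)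
  have h2 := hden i
  have h3 := hden (i+1)
  simp only [show (i:ℤ)-1-1 = i-2 from by ring, show (i:ℤ)-1+1 = i from by ring,
    show (i:ℤ)-1+2 = i+1 from by ring] at h1
  simp only [show (i:ℤ)+1-1 = i from by ring, show (i:ℤ)+1+1 = i+2 from by ring,
    show (i:ℤ)+1+2 = i+3 from by ring] at h3
  have hstar : Acoef v (i-1) * (Dcoef v (i+1) - Bcoef v i)
        * det2 (v (i-1) - v (i+1)) (v i - v (i+2))
      = Bcoef v (i+1) * (Dcoef v i - Bcoef v (i-1))
          * det2 (v (i-1) - v (i+1)) (v (i+1) - v (i+3))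
        + Bcoef v (i+1) * (Dcoef v (i+1) - Bcoef v i)
          * det2 (v i - v (i+2)) (v (i+1) - v (i+3)) := by
    simp only [Acoef, Bcoef, Dcoef,
      show (i:ℤ)-1-1 = i-2 from by ring, show (i:ℤ)-1+1 = i from by ring,
      show (i:ℤ)-1+2 = i+1 from by ring, show (i:ℤ)+1-1 = i from by ring,
      show (i:ℤ)+1+1 = i+2 from by ring, show (i:ℤ)+1+2 = i+3 from by ring]
    exact keyfrac _ _ _ _ _ _ _ _ _ _ h1 h2 h3
      (keypoly (v (i-2)) (v (i-1)) (v i) (v (i+1)) (v (i+2)) (v (i+3)))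
  rw [hDen] at hdenU
  rw [hNum, hDen, div_eq_div_iff hdenU hdenR]
  linear_combination ((Dcoef v i - Bcoef v (i-1)) * (Dcoef v (i+2) - Bcoef v (i+1))) * hstar
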